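/- Let p = 2, n ≥ 1, and d = 2^k + 1 with e = gcd(n, k) and n/e odd. For the Walsh transform W_d(a) = ∑_{x ∈ F_{2^n}} (−1)^{Tr(x^d + ax)}, every value W_d(a) lies in {0, ±2^{(n+e)/2}}. -/

import Mathlib

noncomputable instance (p n : ℕ) [Fact p.Prime] : Fintype (GaloisField p n) :=
  Fintype.ofFinite _

/-- `ω = exp(2πi/p)` raised to (the integer lift of) an element of `F_p`. -/
noncomputable def ew (p : ℕ) (x : ZMod p) : ℂ :=
  Complex.exp (2 * Real.pi * Complex.I / p) ^ x.val

/-- The absolute trace from `F_{p^n}` to `F_p`. -/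
noncomputable def Tr (p n : ℕ) [Fact p.Prime] (x : GaloisField p n) : ZMod p :=
  Algebra.trace (ZMod p) (GaloisField p n) x

instance : Fact (Nat.Prime 2) := ⟨Nat.prime_two⟩

/-! ### auxiliary lemmas about `ew` -/

lemma GoldAux.ew_eq (x : ZMod 2) : ew 2 x = (-1 : ℂ) ^ x.val := by
  unfold ew
  congr 1
  rw [show (2 * (Real.pi:ℂ) * Complex.I / ((2:ℕ):ℂ)) = Real.pi * Complex.I by push_cast; ring,
    Complex.exp_pi_mul_I]

lemma GoldAux.ew_zero : ew 2 0 = 1 := by simp [GoldAux.ew_eq]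

lemma GoldAux.ew_one : ew 2 1 = -1 := by
  rw [GoldAux.ew_eq]
  norm_num [ZMod.val_one]

lemma GoldAux.ew_add (a b : ZMod 2) : ew 2 (a + b) = ew 2 a * ew 2 b := by
  have h : ∀ c : ZMod 2, c = 0 ∨ c = 1 := by decide
  rcases h a with ha | ha <;> rcases h b with hb | hb <;> subst ha <;> subst hb <;>
    simp [GoldAux.ew_zero, GoldAux.ew_one, show (1+1 : ZMod 2) = 0 from rfl]

lemma GoldAux.ew_mul_self (a : ZMod 2) : ew 2 a * ew 2 a = 1 := by
  have h : ∀ c : ZMod 2, c = 0 ∨ c = 1 := by decide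
  rcases h a with ha | ha <;> subst ha <;> simp [GoldAux.ew_zero, GoldAux.ew_one]

/-- Orthogonality: the sum of an additive character over a finite group. -/
lemma GoldAux.char_sum {G : Type*} [AddCommGroup G] [Fintype G] (f : G → ZMod 2)
    (hf : ∀ x y, f (x + y) = f x + f y) :
    (∑ g, ew 2 (f g)) = 0 ∨ ((∀ g, f g = 0) ∧ (∑ g, ew 2 (f g)) = Fintype.card G) := by
  by_cases h : ∀ g, f g = 0
  · right
    refine ⟨h, ?_⟩
    simp [h, GoldAux.ew_zero]
  · left
    push_neg at h
    obtain ⟨g0, hg0⟩ := h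
    have hg1 : f g0 = 1 := by
      have : ∀ c : ZMod 2, c ≠ 0 → c = 1 := by decide
      exact this _ hg0
    have key : (∑ g, ew 2 (f g)) = -(∑ g, ew 2 (f g)) := by
      calc (∑ g, ew 2 (f g)) = ∑ g, ew 2 (f (g + g0)) :=
            (Fintype.sum_equiv (Equiv.addRight g0) (fun g => ew 2 (f (g + g0)))
              (fun g => ew 2 (f g)) (fun g => rfl)).symm
        _ = ∑ g, ew 2 (f g) * ew 2 (f g0) := by simp only [hf, GoldAux.ew_add]
        _ = -(∑ g, ew 2 (f g)) := by
            rw [hg1, GoldAux.ew_one, ← Finset.sum_mul]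
            ring
    have h2 : (∑ g, ew 2 (f g)) + (∑ g, ew 2 (f g)) = 0 := by
      nth_rewrite 2 [key]
      ring
    exact add_self_eq_zero.mp h2

/-! ### power lemmas -/

lemma GoldAux.pow_pow_mul {K : Type*} [Field K] {w : K} {a : ℕ} (q : ℕ) (h : w ^ 2 ^ a = w) :
    w ^ 2 ^ (a * q) = w := by
  induction q with
  | zero => simp
  | succ q ih => rw [Nat.mul_succ, pow_add, pow_mul, ih, h]

lemma GoldAux.pow_gcd {K : Type*} [Field K] (w : K) : ∀ a b : ℕ,
    w ^ 2 ^ a = w → w ^ 2 ^ b = w → w ^ 2 ^ Nat.gcd a b = w := by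
  intro a b
  induction a, b using Nat.gcd.induction with
  | H0 b => intro _ hb; simpa using hb
  | H1 a b ha ih =>
      intro h1 h2
      rw [Nat.gcd_rec]
      apply ih _ h1
      have hq : w ^ 2 ^ (a * (b / a)) = w := GoldAux.pow_pow_mul _ h1
      have : w ^ 2 ^ b = (w ^ 2 ^ (a * (b / a))) ^ 2 ^ (b % a) := by
        rw [← pow_mul, ← pow_add, Nat.div_add_mod]
      rw [hq, h2] at this
      exact this.symm

/-! ### trace lemmas -/

noncomputable def GoldAux.frobAlg (n : ℕ) : GaloisField 2 n ≃ₐ[ZMod 2] GaloisField 2 n :=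
  AlgEquiv.ofRingEquiv (f := frobeniusEquiv (GaloisField 2 n) 2)
    (fun r => by
      show (algebraMap (ZMod 2) (GaloisField 2 n) r) ^ 2 = algebraMap (ZMod 2) (GaloisField 2 n) r
      rw [← map_pow, ZMod.pow_card])

lemma GoldAux.Tr_sq (n : ℕ) (x : GaloisField 2 n) : Tr 2 n (x ^ 2) = Tr 2 n x := by
  have := Algebra.trace_eq_of_algEquiv (GoldAux.frobAlg n) x
  simpa [Tr, GoldAux.frobAlg, frobenius_def] using this

lemma GoldAux.Tr_pow (n : ℕ) (m : ℕ) (x : GaloisField 2 n) :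
    Tr 2 n (x ^ 2 ^ m) = Tr 2 n x := by
  induction m with
  | zero => simp
  | succ m ih => rw [pow_succ, pow_mul, GoldAux.Tr_sq, ih]

lemma GoldAux.Tr_add (n : ℕ) (x y : GaloisField 2 n) :
    Tr 2 n (x + y) = Tr 2 n x + Tr 2 n y := by simp [Tr]

lemma GoldAux.trace_nondegen (n : ℕ) {c : GaloisField 2 n} (hc : c ≠ 0) :
    ∃ x : GaloisField 2 n, Tr 2 n (x * c) ≠ 0 := by
  have hnd := traceForm_nondegenerate (ZMod 2) (GaloisField 2 n)
  by_contra hf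
  push_neg at hf
  apply hc
  apply hnd.1
  intro y
  have := hf y
  rw [Algebra.traceForm_apply]
  rw [mul_comm] at this
  simpa [Tr] using this

lemma GoldAux.pow_card' {n : ℕ} (hn : n ≠ 0) (x : GaloisField 2 n) : x ^ 2 ^ n = x := by
  have hcard : Fintype.card (GaloisField 2 n) = 2 ^ n := by
    rw [← Nat.card_eq_fintype_card, GaloisField.card 2 n hn]
  rw [← hcard, FiniteField.pow_card]

/-! ### counting fixed points of iterated Frobenius -/

open Polynomial in
lemma GoldAux.X_pow_sub_one_dvd {K : Type*} [CommRing K] {a b : ℕ} (h : a ∣ b) :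
    (X ^ a - 1 : K[X]) ∣ X ^ b - 1 := by
  obtain ⟨c, rfl⟩ := h
  have := sub_dvd_pow_sub_pow (X ^ a : K[X]) 1 c
  simpa [← pow_mul] using this

open Polynomial in
lemma GoldAux.pow_sub_X_eq {K : Type*} [CommRing K] {m : ℕ} (hm : m ≠ 0) :
    (X ^ m - X : K[X]) = X * (X ^ (m - 1) - 1) := by
  rw [mul_sub, mul_one, ← pow_succ']
  congr 2
  omega

open Polynomial in
lemma GoldAux.gpoly_dvd {K : Type*} [CommRing K] {e n : ℕ} (h : e ∣ n) :
    (X ^ 2 ^ e - X : K[X]) ∣ X ^ 2 ^ n - X := by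
  rw [GoldAux.pow_sub_X_eq (K := K) (m := 2 ^ e) (by positivity : (0:ℕ) < 2 ^ e).ne',
    GoldAux.pow_sub_X_eq (K := K) (m := 2 ^ n) (by positivity : (0:ℕ) < 2 ^ n).ne']
  apply mul_dvd_mul_left
  apply GoldAux.X_pow_sub_one_dvd
  obtain ⟨c, rfl⟩ := h
  have := Nat.sub_dvd_pow_sub_pow (2 ^ e) 1 c
  simpa [← pow_mul] using this

open Polynomial in
lemma GoldAux.card_fixed (n e : ℕ) (hn : n ≠ 0) (he : e ≠ 0) (hdvd : e ∣ n) :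
    Nat.card {w : GaloisField 2 n // w ^ 2 ^ e = w} = 2 ^ e := by
  classical
  rw [Nat.card_eq_fintype_card, Fintype.card_subtype]
  set K := GaloisField 2 n
  set P : K[X] := X ^ 2 ^ e - X with hP
  have hP0 : P ≠ 0 := FiniteField.X_pow_card_pow_sub_X_ne_zero K he one_lt_two
  have hPdeg : P.natDegree = 2 ^ e := FiniteField.X_pow_card_pow_sub_X_natDegree_eq K he one_lt_two
  have hsep : P.Separable := galois_poly_separable 2 (2 ^ e) (dvd_pow_self 2 he)
  have hfilter : (Finset.univ.filter fun w : K => w ^ 2 ^ e = w) = P.roots.toFinset := by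
    ext w
    simp only [Finset.mem_filter, Finset.mem_univ, true_and, Multiset.mem_toFinset]
    rw [mem_roots hP0]
    simp only [IsRoot.def, hP, eval_sub, eval_pow, eval_X, sub_eq_zero]
  rw [hfilter, Multiset.toFinset_card_of_nodup (nodup_roots hsep)]
  set Q : K[X] := X ^ 2 ^ n - X with hQ
  have hQ0 : Q ≠ 0 := FiniteField.X_pow_card_pow_sub_X_ne_zero K hn one_lt_two
  have hQdeg : Q.natDegree = 2 ^ n := FiniteField.X_pow_card_pow_sub_X_natDegree_eq K hn one_lt_two
  obtain ⟨P₂, hQP⟩ : P ∣ Q := GoldAux.gpoly_dvd hdvd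
  have hP₂0 : P₂ ≠ 0 := by rintro rfl; simp [mul_zero] at hQP; exact hQ0 hQP
  have hcardK : Fintype.card K = 2 ^ n := by
    rw [← Nat.card_eq_fintype_card, GaloisField.card 2 n hn]
  have hQroots : Multiset.card Q.roots = 2 ^ n := by
    refine le_antisymm (hQdeg ▸ Q.card_roots') ?_
    have hsub : Finset.univ ⊆ Q.roots.toFinset := by
      intro x _
      simp only [Multiset.mem_toFinset]
      rw [mem_roots hQ0]
      simp only [IsRoot.def, hQ, eval_sub, eval_pow,
        eval_X, sub_eq_zero]
      rw [← hcardK, FiniteField.pow_card]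
    calc 2 ^ n = Finset.univ.card := by rw [Finset.card_univ, hcardK]
      _ ≤ Q.roots.toFinset.card := Finset.card_le_card hsub
      _ ≤ Multiset.card Q.roots := Multiset.toFinset_card_le _
  have hdegs : P.natDegree + P₂.natDegree = 2 ^ n := by
    rw [← Polynomial.natDegree_mul hP0 hP₂0, ← hQP, hQdeg]
  have hge : 2 ^ e ≤ Multiset.card P.roots := by
    have hmul : Q.roots = P.roots + P₂.roots := by rw [hQP, Polynomial.roots_mul (hQP ▸ hQ0)]
    have h2 : Multiset.card P₂.roots ≤ P₂.natDegree := P₂.card_roots'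
    have := congrArg Multiset.card hmul
    rw [hQroots, Multiset.card_add] at this
    omega
  exact le_antisymm (hPdeg ▸ P.card_roots') hge

/-! ### arithmetic lemma -/

lemma GoldAux.gcd_two_mul_eq (n k : ℕ) (hn : 1 ≤ n) (h : Odd (n / Nat.gcd n k)) :
    Nat.gcd n (2 * k) = Nat.gcd n k := by
  set e := Nat.gcd n k with he
  have he0 : e ≠ 0 := Nat.gcd_ne_zero_left (by omega)
  have h1 : e ∣ Nat.gcd n (2 * k) :=
    Nat.dvd_gcd (Nat.gcd_dvd_left n k) ((Nat.gcd_dvd_right n k).mul_left 2)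
  have h2 : Nat.gcd n (2 * k) ∣ 2 * e := by
    have ha : Nat.gcd n (2 * k) ∣ 2 * n := (Nat.gcd_dvd_left n (2*k)).mul_left 2
    have hb : Nat.gcd n (2 * k) ∣ 2 * k := Nat.gcd_dvd_right n (2*k)
    have := Nat.dvd_gcd ha hb
    rwa [Nat.gcd_mul_left, ← he] at this
  obtain ⟨c, hc⟩ := h1
  have hc2 : c ∣ 2 := by
    have h3 : e * c ∣ e * 2 := by rw [← hc, mul_comm e 2]; exact h2
    exact (Nat.mul_dvd_mul_iff_left (Nat.pos_of_ne_zero he0)).mp h3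
  have hc2' : c = 1 ∨ c = 2 := (Nat.prime_two.eq_one_or_self_of_dvd c hc2).imp id id
  rcases hc2' with rfl | rfl
  · omega
  · exfalso
    have hdn : e * 2 ∣ n := hc ▸ Nat.gcd_dvd_left n (2 * k)
    obtain ⟨t, ht⟩ := hdn
    have : n / e = 2 * t := by
      rw [ht, mul_assoc, Nat.mul_div_cancel_left _ (Nat.pos_of_ne_zero he0)]
    rw [this] at h
    exact (Nat.not_odd_iff_even.mpr ⟨t, by ring⟩) h

/-- Gold's theorem: the Walsh transform of `Tr(x^{2^k+1})` takes only the
values `0` and `±2^{(n+e)/2}` where `e = gcd(n,k)` and `n/e` is odd. -/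
theorem gold_walsh_three_valued (n k : ℕ) (hn : 1 ≤ n) (hk : 1 ≤ k)
    (h : Odd (n / Nat.gcd n k)) :
    ∀ a : GaloisField 2 n,
      (∑ x : GaloisField 2 n, ew 2 (Tr 2 n (x ^ (2 ^ k + 1) + a * x))) = 0 ∨
      (∑ x : GaloisField 2 n, ew 2 (Tr 2 n (x ^ (2 ^ k + 1) + a * x)))
        = 2 ^ ((n + Nat.gcd n k) / 2) ∨
      (∑ x : GaloisField 2 n, ew 2 (Tr 2 n (x ^ (2 ^ k + 1) + a * x)))
        = -2 ^ ((n + Nat.gcd n k) / 2) := by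
  intro a
  classical
  set e := Nat.gcd n k with hedef
  have he0 : e ≠ 0 := Nat.gcd_ne_zero_left (by omega)
  have hedvdn : e ∣ n := Nat.gcd_dvd_left n k
  have hedvdk : e ∣ k := Nat.gcd_dvd_right n k
  have hn0 : n ≠ 0 := by omega
  set f : GaloisField 2 n → ZMod 2 := fun z => Tr 2 n (z ^ (2 ^ k + 1) + a * z) with hfdef
  set B : GaloisField 2 n → GaloisField 2 n → ZMod 2 :=
    fun x w => Tr 2 n (x ^ 2 ^ k * w + x * w ^ 2 ^ k) with hBdef
  have hchar : CharP (GaloisField 2 n) 2 := inferInstance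
  -- additivity with error term
  have hfadd : ∀ x w, f (x + w) = f x + f w + B x w := by
    intro x w
    have hKey : (x + w) ^ (2 ^ k + 1) + a * (x + w)
        = ((x ^ (2 ^ k + 1) + a * x) + (w ^ (2 ^ k + 1) + a * w))
          + (x ^ 2 ^ k * w + x * w ^ 2 ^ k) := by
      have hp : ∀ z : GaloisField 2 n, z ^ (2 ^ k + 1) = z ^ 2 ^ k * z :=
        fun z => pow_succ z (2 ^ k)
      rw [hp, hp, hp, add_pow_char_pow]
      ring
    simp only [hfdef, hBdef]
    rw [hKey, GoldAux.Tr_add, GoldAux.Tr_add]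
  have hBadd : ∀ w x y, B (x + y) w = B x w + B y w := by
    intro w x y
    have hKey : (x + y) ^ 2 ^ k * w + (x + y) * w ^ 2 ^ k
        = (x ^ 2 ^ k * w + x * w ^ 2 ^ k) + (y ^ 2 ^ k * w + y * w ^ 2 ^ k) := by
      rw [add_pow_char_pow]
      ring
    simp only [hBdef]
    rw [hKey, GoldAux.Tr_add]
  -- translation of traces
  have hxcard : ∀ x : GaloisField 2 n, x ^ 2 ^ n = x := GoldAux.pow_card' hn0
  have htkn : k + k * (n - 1) = k * n := by
    have h' : n - 1 + 1 = n := Nat.succ_pred_eq_of_pos hn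
    calc k + k * (n - 1) = k * ((n - 1) + 1) := by ring
      _ = k * n := by rw [h']
  have hknx : ∀ x : GaloisField 2 n, x ^ 2 ^ (k * n) = x := by
    intro x
    rw [mul_comm k n]
    exact GoldAux.pow_pow_mul k (hxcard x)
  have htrans : ∀ x w : GaloisField 2 n,
      Tr 2 n (x ^ 2 ^ k * w) = Tr 2 n (x * w ^ 2 ^ (k * (n - 1))) := by
    intro x w
    rw [← GoldAux.Tr_pow n (k * (n - 1)) (x ^ 2 ^ k * w), mul_pow, ← pow_mul, ← pow_add, htkn,
      hknx]
  -- characterization of the radical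
  have hmem : ∀ w : GaloisField 2 n, (∀ x, B x w = 0) ↔ w ^ 2 ^ e = w := by
    intro w
    constructor
    · intro hB
      have hL : ∀ x, Tr 2 n (x * (w ^ 2 ^ (k * (n - 1)) + w ^ 2 ^ k)) = 0 := by
        intro x
        have := hB x
        simp only [hBdef] at this
        rw [GoldAux.Tr_add, htrans] at this
        rw [mul_add, GoldAux.Tr_add]
        exact this
      have hc0 : w ^ 2 ^ (k * (n - 1)) + w ^ 2 ^ k = 0 := by
        by_contra hne
        obtain ⟨x, hx⟩ := GoldAux.trace_nondegen n hne
        exact hx (hL x)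
      have heq : w ^ 2 ^ (k * (n - 1)) = w ^ 2 ^ k := by
        rw [add_eq_zero_iff_eq_neg, CharTwo.neg_eq] at hc0
        exact hc0
      have h2k : w ^ 2 ^ (2 * k) = w := by
        have hL1 : (w ^ 2 ^ (k * (n - 1))) ^ 2 ^ k = w := by
          rw [← pow_mul, ← pow_add, show k * (n - 1) + k = k * n from by rw [add_comm]; exact htkn,
            hknx]
        have hL2 : (w ^ 2 ^ k) ^ 2 ^ k = w ^ 2 ^ (2 * k) := by
          rw [← pow_mul, ← pow_add, ← two_mul]
        calc w ^ 2 ^ (2 * k) = (w ^ 2 ^ k) ^ 2 ^ k := hL2.symm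
          _ = (w ^ 2 ^ (k * (n - 1))) ^ 2 ^ k := by rw [heq]
          _ = w := hL1
      have := GoldAux.pow_gcd w n (2 * k) (hxcard w) h2k
      rwa [GoldAux.gcd_two_mul_eq n k hn h, ← hedef] at this
    · intro hw
      have hwk : w ^ 2 ^ k = w := by
        obtain ⟨c, hc⟩ := hedvdk
        rw [hc]
        exact GoldAux.pow_pow_mul c hw
      intro x
      simp only [hBdef]
      rw [GoldAux.Tr_add]
      have h1 : Tr 2 n (x ^ 2 ^ k * w) = Tr 2 n (x * w) := by
        conv_lhs => rw [← hwk]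
        rw [← mul_pow, GoldAux.Tr_pow]
      rw [h1, hwk, CharTwo.add_self_eq_zero]
  -- the radical as an additive subgroup
  set Rgrp : AddSubgroup (GaloisField 2 n) :=
    { carrier := {w | w ^ 2 ^ e = w}
      add_mem' := by
        intro w1 w2 h1 h2
        simp only [Set.mem_setOf_eq] at *
        rw [add_pow_char_pow, h1, h2]
      zero_mem' := by
        simp only [Set.mem_setOf_eq]
        exact zero_pow (by positivity)
      neg_mem' := by
        intro w hw
        simp only [Set.mem_setOf_eq] at *
        rw [CharTwo.neg_eq]
        exact hw } with hRdef
  have hmemR : ∀ w : GaloisField 2 n, w ∈ Rgrp ↔ w ^ 2 ^ e = w := fun w => Iff.rfl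
  have hcardR : (Fintype.card Rgrp : ℂ) = 2 ^ e := by
    have := GoldAux.card_fixed n e hn0 he0 hedvdn
    have h2 : Nat.card Rgrp = 2 ^ e := by
      rw [← this]
      exact Nat.card_congr (Equiv.subtypeEquivRight (fun w => hmemR w))
    rw [← Nat.card_eq_fintype_card, h2]
    push_cast
    ring
  have hcardK : Fintype.card (GaloisField 2 n) = 2 ^ n := by
    rw [← Nat.card_eq_fintype_card, GaloisField.card 2 n hn0]
  -- main computation
  set S : ℂ := ∑ x : GaloisField 2 n, ew 2 (f x) with hSdef
  have step1 : S * S = ∑ w : GaloisField 2 n, ew 2 (f w) * ∑ x : GaloisField 2 n, ew 2 (B x w) := by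
    calc S * S = ∑ x : GaloisField 2 n, ∑ y : GaloisField 2 n, ew 2 (f x) * ew 2 (f y) := by
          rw [hSdef, Finset.sum_mul_sum]
      _ = ∑ x : GaloisField 2 n, ∑ w : GaloisField 2 n, ew 2 (f x) * ew 2 (f (x + w)) := by
          refine Finset.sum_congr rfl (fun x _ => ?_)
          exact (Fintype.sum_equiv (Equiv.addLeft x) (fun w => ew 2 (f x) * ew 2 (f (x + w)))
            (fun y => ew 2 (f x) * ew 2 (f y)) (fun w => rfl)).symm
      _ = ∑ x : GaloisField 2 n, ∑ w : GaloisField 2 n, ew 2 (f w) * ew 2 (B x w) := by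
          refine Finset.sum_congr rfl (fun x _ => Finset.sum_congr rfl (fun w _ => ?_))
          have hrw : ew 2 (f x) * ew 2 (f (x + w))
              = (ew 2 (f x) * ew 2 (f x)) * (ew 2 (f w) * ew 2 (B x w)) := by
            rw [hfadd x w, GoldAux.ew_add, GoldAux.ew_add]
            ring
          rw [hrw, GoldAux.ew_mul_self, one_mul]
      _ = ∑ w : GaloisField 2 n, ∑ x : GaloisField 2 n, ew 2 (f w) * ew 2 (B x w) :=
          Finset.sum_comm
      _ = ∑ w : GaloisField 2 n, ew 2 (f w) * ∑ x : GaloisField 2 n, ew 2 (B x w) := by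
          simp [Finset.mul_sum]
  have step2 : ∀ w : GaloisField 2 n,
      (∑ x : GaloisField 2 n, ew 2 (B x w)) = if w ^ 2 ^ e = w then ((2:ℂ) ^ n) else 0 := by
    intro w
    rcases GoldAux.char_sum (fun x => B x w) (fun x y => hBadd w x y) with h0 | ⟨hall, hsum⟩
    · have hnot : ¬ (w ^ 2 ^ e = w) := by
        intro hwin
        have hall' := (hmem w).mpr hwin
        have hs : (∑ x : GaloisField 2 n, ew 2 (B x w))
            = (Fintype.card (GaloisField 2 n) : ℂ) := by
          simp [hall', GoldAux.ew_zero]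
        rw [h0, hcardK] at hs
        push_cast at hs
        exact absurd hs.symm (pow_ne_zero n two_ne_zero)
      rw [h0, if_neg hnot]
    · rw [if_pos ((hmem w).mp hall), hsum, hcardK]
      push_cast
      ring
  have step3 : S * S = (2:ℂ) ^ n * ∑ g : Rgrp, ew 2 (f ↑g) := by
    calc S * S = ∑ w : GaloisField 2 n, ew 2 (f w) * ∑ x : GaloisField 2 n, ew 2 (B x w) := step1
      _ = ∑ w : GaloisField 2 n, (if w ^ 2 ^ e = w then ew 2 (f w) * (2:ℂ) ^ n else 0) := by
          refine Finset.sum_congr rfl fun w _ => ?_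
          rw [step2 w, mul_ite, mul_zero]
      _ = ∑ w ∈ Finset.univ.filter (fun w : GaloisField 2 n => w ^ 2 ^ e = w),
            ew 2 (f w) * (2:ℂ) ^ n := (Finset.sum_filter _ _).symm
      _ = ∑ g : Rgrp, ew 2 (f ↑g) * (2:ℂ) ^ n := by
          refine Finset.sum_subtype _ (fun w => ?_) _
          simp [Finset.mem_filter, hmemR w]
      _ = (2:ℂ) ^ n * ∑ g : Rgrp, ew 2 (f ↑g) := by rw [← Finset.sum_mul]; ring
  have hadd : ∀ x y : Rgrp, f ↑(x + y) = f ↑x + f ↑y := by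
    intro x y
    have hco : ((x + y : Rgrp) : GaloisField 2 n) = ↑x + ↑y := rfl
    have hy : (↑y : GaloisField 2 n) ^ 2 ^ e = ↑y := y.2
    have hB0 : B ↑x ↑y = 0 := (hmem (↑y : GaloisField 2 n)).mpr hy ↑x
    rw [hco, hfadd, hB0, add_zero]
  rcases GoldAux.char_sum (fun g : Rgrp => f ↑g) hadd with hT0 | ⟨_, hTcard⟩
  · left
    have : S * S = 0 := by rw [step3, hT0, mul_zero]
    exact mul_self_eq_zero.mp this
  · have hSS : S * S = (2:ℂ) ^ n * (2:ℂ) ^ e := by rw [step3, hTcard, hcardR]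
    obtain ⟨t, ht⟩ := h
    have hten : 2 * (t * e) + e = n := by
      have h1 : n / e * e = n := Nat.div_mul_cancel hedvdn
      rw [ht] at h1
      rw [← h1]
      ring
    have hpar : (n + e) / 2 + (n + e) / 2 = n + e := by omega
    have hSS2 : S * S = ((2:ℂ) ^ ((n + e) / 2)) * ((2:ℂ) ^ ((n + e) / 2)) := by
      rw [hSS, ← pow_add, ← pow_add, hpar]
    rcases mul_self_eq_mul_self_iff.mp hSS2 with h' | h'
    · right; left; exact h'
    · right; right; exact h'
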